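/- arXiv:2003.03873 — 2 statements merged into one kernel-verified Lean document; each statement's English description precedes it below -/
import Mathlib

section
/- The join of the cycle C_{n-2} with the edgeless graph on 2 vertices has diameter 2 for all n ≥ 5, and its Wiener index equals n^2 - 4n + 6. -/
open SimpleGraph Finset

/-- The Wiener index of a graph. -/
noncomputable def wienerIndex {V : Type*} [Fintype V] (G : SimpleGraph V) : ℕ :=
  (∑ u : V, ∑ v : V, G.dist u v) / 2

/-- The join of two graphs: disjoint union of the vertex sets, keeping all edges of both
graphs and adding all edges between the two vertex sets. -/
def graphJoin {α β : Type*} (G : SimpleGraph α) (H : SimpleGraph β) :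
    SimpleGraph (α ⊕ β) where
  Adj x y :=
    match x, y with
    | Sum.inl a, Sum.inl b => G.Adj a b
    | Sum.inr a, Sum.inr b => H.Adj a b
    | Sum.inl _, Sum.inr _ => True
    | Sum.inr _, Sum.inl _ => True
  symm := by
    exact ⟨by rintro (a | a) (b | b) h <;> simp_all [SimpleGraph.adj_comm]⟩
  loopless := by
    exact ⟨by rintro (a | a) h <;> simp_all⟩

private lemma edist_le_two' {V : Type*} (G : SimpleGraph V) {u v w : V}
    (h1 : G.Adj u w) (h2 : G.Adj w v) : G.edist u v ≤ 2 := by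
  have := G.edist_le (Walk.cons h1 (Walk.cons h2 Walk.nil))
  simpa using this

private lemma edist_eq_two' {V : Type*} (G : SimpleGraph V) {u v : V}
    (hne : u ≠ v) (hadj : ¬ G.Adj u v) (hle : G.edist u v ≤ 2) :
    G.edist u v = 2 := by
  have hne_top : G.edist u v ≠ ⊤ := fun h => by simp [h] at hle
  have h0 : G.edist u v ≠ 0 := (G.edist_pos_of_ne hne).ne'
  have h1 : G.edist u v ≠ 1 := fun h => hadj (SimpleGraph.edist_eq_one_iff_adj.mp h)
  lift G.edist u v to ℕ using hne_top with k
  have hk2 : k ≤ 2 := by exact_mod_cast hle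
  have hk0 : k ≠ 0 := by exact_mod_cast h0
  have hk1 : k ≠ 1 := by exact_mod_cast h1
  have : k = 2 := by omega
  exact_mod_cast congrArg (Nat.cast : ℕ → ℕ∞) this

section main

variable {m : ℕ}

private lemma join_edist_inl_inr (a : Fin m) (b : Fin 2) :
    (graphJoin (cycleGraph m) (⊥ : SimpleGraph (Fin 2))).edist (Sum.inl a) (Sum.inr b) = 1 :=
  SimpleGraph.edist_eq_one_iff_adj.mpr trivial

private lemma join_edist_inr_inl (b : Fin 2) (a : Fin m) :
    (graphJoin (cycleGraph m) (⊥ : SimpleGraph (Fin 2))).edist (Sum.inr b) (Sum.inl a) = 1 :=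
  SimpleGraph.edist_eq_one_iff_adj.mpr trivial

private lemma join_edist_inl_inl (a b : Fin m) :
    (graphJoin (cycleGraph m) (⊥ : SimpleGraph (Fin 2))).edist (Sum.inl a) (Sum.inl b) =
      if a = b then 0 else if (cycleGraph m).Adj a b then 1 else 2 := by
  split_ifs with h1 h2
  · subst h1; exact SimpleGraph.edist_self
  · exact SimpleGraph.edist_eq_one_iff_adj.mpr h2
  · refine edist_eq_two' _ (by simp [h1]) h2 ?_
    exact edist_le_two' _ (w := Sum.inr 0) trivial trivial

private lemma join_edist_inr_inr (hm : 0 < m) (a b : Fin 2) :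
    (graphJoin (cycleGraph m) (⊥ : SimpleGraph (Fin 2))).edist (Sum.inr a) (Sum.inr b) =
      if a = b then 0 else 2 := by
  split_ifs with h1
  · subst h1; exact SimpleGraph.edist_self
  · refine edist_eq_two' _ (by simp [h1]) (fun h => h) ?_
    exact edist_le_two' _ (w := Sum.inl ⟨0, hm⟩) trivial trivial

private lemma join_diam (hm : 0 < m) :
    (graphJoin (cycleGraph m) (⊥ : SimpleGraph (Fin 2))).diam = 2 := by
  have hediam : (graphJoin (cycleGraph m) (⊥ : SimpleGraph (Fin 2))).ediam = 2 := by
    refine le_antisymm (SimpleGraph.ediam_le_of_edist_le ?_) ?_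
    · rintro (a | a) (b | b)
      · rw [join_edist_inl_inl]; split_ifs <;> norm_num
      · rw [join_edist_inl_inr]; norm_num
      · rw [join_edist_inr_inl]; norm_num
      · rw [join_edist_inr_inr hm]; split_ifs <;> norm_num
    · calc (2 : ℕ∞) = (graphJoin (cycleGraph m) (⊥ : SimpleGraph (Fin 2))).edist
            (Sum.inr 0) (Sum.inr 1) := by rw [join_edist_inr_inr hm]; norm_num
        _ ≤ _ := SimpleGraph.edist_le_ediam
  rw [SimpleGraph.diam, hediam]; rfl

end main

private lemma join_dist_sum (k : ℕ) :
    (∑ u, ∑ v, (graphJoin (cycleGraph (k + 3)) (⊥ : SimpleGraph (Fin 2))).dist u v) =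
      2 * (k + 3) ^ 2 + 4 := by
  set m := k + 3 with hmdef
  have hm0 : 0 < m := by omega
  set G := graphJoin (cycleGraph m) (⊥ : SimpleGraph (Fin 2)) with hG
  have hdist : ∀ u v, G.dist u v = (G.edist u v).toNat := fun _ _ => rfl
  have hinl : ∀ a b : Fin m, G.dist (Sum.inl a) (Sum.inl b) =
      if a = b then 0 else if (cycleGraph m).Adj a b then 1 else 2 := by
    intro a b
    rw [hdist, join_edist_inl_inl]
    split_ifs <;> simp
  have hinr : ∀ a b : Fin 2, G.dist (Sum.inr a) (Sum.inr b) = if a = b then 0 else 2 := by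
    intro a b
    rw [hdist, join_edist_inr_inr hm0]
    split_ifs <;> simp
  have hlr : ∀ (a : Fin m) (b : Fin 2), G.dist (Sum.inl a) (Sum.inr b) = 1 := by
    intro a b; rw [hdist, join_edist_inl_inr]; simp
  have hrl : ∀ (b : Fin 2) (a : Fin m), G.dist (Sum.inr b) (Sum.inl a) = 1 := by
    intro b a; rw [hdist, join_edist_inr_inl]; simp
  simp only [Fintype.sum_sum_type, hinl, hinr, hlr, hrl]
  have hT2 : (∑ _a : Fin m, ∑ _b : Fin 2, (1 : ℕ)) = 2 * m := by
    simp [Finset.sum_const, mul_comm]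
  have hT3 : (∑ _b : Fin 2, ∑ _a : Fin m, (1 : ℕ)) = 2 * m := by
    simp [Finset.sum_const, mul_comm]
  have hT4 : (∑ a : Fin 2, ∑ b : Fin 2, if a = b then (0 : ℕ) else 2) = 4 := by decide
  have hdeg : ∀ a : Fin m, (∑ b : Fin m, if (cycleGraph m).Adj a b then (1 : ℕ) else 0) = 2 := by
    intro a
    have h1 : (∑ b : Fin m, if (cycleGraph m).Adj a b then (1 : ℕ) else 0) =
        (cycleGraph m).degree a := by
      rw [SimpleGraph.degree, SimpleGraph.neighborFinset_eq_filter, Finset.card_filter]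
    rw [h1]
    exact SimpleGraph.cycleGraph_degree_three_le
  have hC : ∀ a : Fin m, (∑ b : Fin m, if a = b then (0 : ℕ) else 2) + 2 = 2 * m := by
    intro a
    have h1 : (∑ b : Fin m, if a = b then (0 : ℕ) else 2) +
        (∑ b : Fin m, if a = b then (2 : ℕ) else 0) = ∑ _b : Fin m, (2 : ℕ) := by
      rw [← Finset.sum_add_distrib]
      exact Finset.sum_congr rfl fun b _ => by split_ifs <;> rfl
    have h2 : (∑ b : Fin m, if a = b then (2 : ℕ) else 0) = 2 := by
      simp [Finset.sum_ite_eq]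
    have h3 : (∑ _b : Fin m, (2 : ℕ)) = 2 * m := by
      simp [Finset.sum_const, mul_comm]
    omega
  have key : ∀ a b : Fin m,
      ((if a = b then 0 else if (cycleGraph m).Adj a b then 1 else 2) : ℕ) +
        (if (cycleGraph m).Adj a b then 1 else 0) = (if a = b then 0 else 2) := by
    intro a b
    rcases eq_or_ne a b with rfl | h
    · simp
    · simp only [if_neg h]; split_ifs <;> rfl
  have hrow : ∀ a : Fin m, (∑ b : Fin m, if a = b then (0 : ℕ) else
      if (cycleGraph m).Adj a b then 1 else 2) + 4 = 2 * m := by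
    intro a
    have h1 : (∑ b : Fin m, if a = b then (0 : ℕ) else
        if (cycleGraph m).Adj a b then 1 else 2) +
        (∑ b : Fin m, if (cycleGraph m).Adj a b then (1 : ℕ) else 0) =
        ∑ b : Fin m, if a = b then (0 : ℕ) else 2 := by
      rw [← Finset.sum_add_distrib]
      exact Finset.sum_congr rfl fun b _ => key a b
    have h2 := hdeg a
    have h3 := hC a
    omega
  have hT1 : (∑ a : Fin m, ∑ b : Fin m, if a = b then (0 : ℕ) else
      if (cycleGraph m).Adj a b then 1 else 2) + 4 * m = 2 * (m * m) := by
    have h1 : (∑ a : Fin m, ∑ b : Fin m, if a = b then (0 : ℕ) else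
        if (cycleGraph m).Adj a b then 1 else 2) + 4 * m =
        ∑ a : Fin m, ((∑ b : Fin m, if a = b then (0 : ℕ) else
          if (cycleGraph m).Adj a b then 1 else 2) + 4) := by
      rw [Finset.sum_add_distrib]
      simp [Finset.sum_const, mul_comm]
    rw [h1, Finset.sum_congr rfl fun a _ => hrow a]
    simp [Finset.sum_const]
    ring
  have hT2' : (∑ _x : Fin m, ∑ _x : Fin 2, (1 : ℕ)) = 2 * m := hT2
  have hT3' : (∑ _x : Fin 2, ∑ _x : Fin m, (1 : ℕ)) = 2 * m := hT3
  rw [Finset.sum_add_distrib, Finset.sum_add_distrib, hT2', hT3', hT4]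
  have hsq : m ^ 2 = m * m := sq m
  omega

/-- For `n ≥ 5`, the join of the cycle `C_{n-2}` with the edgeless graph on two vertices
has diameter `2` and Wiener index `n² - 4n + 6`. -/
theorem join_cycle_diam_and_wiener (n : ℕ) (hn : 5 ≤ n) :
    (graphJoin (cycleGraph (n - 2)) (⊥ : SimpleGraph (Fin 2))).diam = 2 ∧
    wienerIndex (graphJoin (cycleGraph (n - 2)) (⊥ : SimpleGraph (Fin 2))) =
      n ^ 2 - 4 * n + 6 := by
  refine ⟨join_diam (by omega), ?_⟩
  obtain ⟨j, rfl⟩ : ∃ j, n = j + 5 := ⟨n - 5, by omega⟩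
  have ha : j + 5 - 2 = j + 3 := rfl
  rw [wienerIndex, ha, join_dist_sum j]
  have e1 : (j + 3) ^ 2 = j * j + 6 * j + 9 := by ring
  have e2 : (j + 5) ^ 2 = j * j + 10 * j + 25 := by ring
  omega
end

section
/- Among all integer sequences x_1 ≥ ... ≥ x_n with n = 2k+1 (k ≥ 8), ∑ x_i = 4(n-2), and 3 ≤ x_i ≤ k-2 for all i, the maximum of ∑ x_i^2 equals 2(k-2)^2 + 36 + 9(2k-2) = 2k^2 + 10k + 26, attained by the sequence (k-2, k-2, 6, 3, 3, ..., 3). -/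
open Finset

private lemma aux_scalar (a b c k : ℤ) (hk : (8:ℤ) ≤ k) (_h3 : 3 ≤ c) (hcb : c ≤ b)
    (hba : b ≤ a) (hak : a ≤ k - 2) (habc : a + b + c ≤ 2*k + 2) :
    a^2 + b^2 + ((c+3)*(8*k-4-a-b) - 3*c*(2*k-1)) ≤ 2*k^2 + 10*k + 26 := by
  nlinarith [mul_nonneg (sub_nonneg.2 hcb) (sub_nonneg.2 hba), sq_nonneg (a-b),
    mul_nonneg (sub_nonneg.2 hak) (by linarith : (0:ℤ) ≤ k-2-b),
    mul_nonneg (by linarith : (0:ℤ) ≤ c-3) (by linarith : (0:ℤ) ≤ 2*k+2-a-b-c),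
    mul_nonneg (by linarith : (0:ℤ) ≤ k-2-a) (by linarith : (0:ℤ) ≤ a-c),
    mul_nonneg (by linarith : (0:ℤ) ≤ k-2-b) (by linarith : (0:ℤ) ≤ b-c),
    sq_nonneg (k-8), sq_nonneg (a+b-2*k+4)]

/-- Among all nonincreasing integer sequences `x₁ ≥ … ≥ xₙ` with `n = 2k + 1` (`k ≥ 8`),
sum `4(n - 2)`, and `3 ≤ xᵢ ≤ k - 2` for all `i`, the maximum of `∑ xᵢ²` equals
`2(k-2)² + 36 + 9(2k-2) = 2k² + 10k + 26`, attained by `(k-2, k-2, 6, 3, …, 3)`. -/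
theorem max_sum_sq_odd_quadrangulation_degrees (k : ℕ) (hk : 8 ≤ k) (n : ℕ)
    (hn : n = 2 * k + 1) :
    let y : Fin n → ℤ := fun i =>
      if (i : ℕ) < 2 then (k : ℤ) - 2 else if (i : ℕ) = 2 then 6 else 3
    ((∀ i j : Fin n, i ≤ j → y j ≤ y i) ∧ (∑ i, y i = 4 * ((n : ℤ) - 2)) ∧
      (∀ i, 3 ≤ y i ∧ y i ≤ (k : ℤ) - 2) ∧
      (∑ i, (y i) ^ 2 = 2 * ((k : ℤ) - 2) ^ 2 + 36 + 9 * (2 * (k : ℤ) - 2)) ∧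
      (∑ i, (y i) ^ 2 = 2 * (k : ℤ) ^ 2 + 10 * (k : ℤ) + 26)) ∧
    ∀ x : Fin n → ℤ, (∀ i j : Fin n, i ≤ j → x j ≤ x i) →
      (∑ i, x i = 4 * ((n : ℤ) - 2)) → (∀ i, 3 ≤ x i ∧ x i ≤ (k : ℤ) - 2) →
      ∑ i, (x i) ^ 2 ≤ 2 * (k : ℤ) ^ 2 + 10 * (k : ℤ) + 26 := by
  intro y
  have h0n : 0 < n := by omega
  have h1n : 1 < n := by omega
  have h2n : 2 < n := by omega
  have hnz : (n:ℤ) = 2*(k:ℤ)+1 := by rw [hn]; push_cast; ring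
  set i0 : Fin n := ⟨0, h0n⟩ with hi0
  set i1 : Fin n := ⟨1, h1n⟩ with hi1
  set i2 : Fin n := ⟨2, h2n⟩ with hi2
  have hne01 : i0 ≠ i1 := Fin.ne_of_val_ne (show (0:ℕ) ≠ 1 by omega)
  have hne10 : i1 ≠ i0 := Fin.ne_of_val_ne (show (1:ℕ) ≠ 0 by omega)
  have hne20 : i2 ≠ i0 := Fin.ne_of_val_ne (show (2:ℕ) ≠ 0 by omega)
  have hne21 : i2 ≠ i1 := Fin.ne_of_val_ne (show (2:ℕ) ≠ 1 by omega)
  have hcond : ∀ i : Fin n, ((i:ℕ) = 2) = (i = i2) :=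
    fun i => propext ⟨fun h => Fin.ext h, fun h => h ▸ rfl⟩
  -- generic sum computation
  have key : ∀ p q r : ℤ,
      (∑ i : Fin n, if (i:ℕ) < 2 then p else if (i:ℕ) = 2 then q else r)
        = 2*p + q + ((n:ℤ)-3)*r := by
    intro p q r
    have h1 : ∀ i : Fin n, (if (i:ℕ) < 2 then p else if (i:ℕ) = 2 then q else r)
        = r + ((if (i:ℕ) < 2 then p - r else 0) + (if (i:ℕ) = 2 then q - r else 0)) := by
      intro i
      split_ifs <;> first | ring1 | omega
    rw [Finset.sum_congr rfl (fun i _ => h1 i)]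
    simp only [hcond]
    rw [Finset.sum_add_distrib, Finset.sum_add_distrib, Finset.sum_const,
      ← Finset.sum_filter, Finset.sum_ite_eq' univ i2 (fun _ => q - r),
      if_pos (Finset.mem_univ i2)]
    have hfilter : univ.filter (fun i : Fin n => (i:ℕ) < 2) = {i0, i1} := by
      ext i
      rw [Finset.mem_filter, Finset.mem_insert, Finset.mem_singleton]
      constructor
      · rintro ⟨-, h⟩
        have h' : (i:ℕ) = 0 ∨ (i:ℕ) = 1 := by omega
        rcases h' with h'|h'
        · exact Or.inl (Fin.ext h')
        · exact Or.inr (Fin.ext h')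
      · rintro (rfl|rfl)
        · exact ⟨Finset.mem_univ _, Nat.zero_lt_two⟩
        · exact ⟨Finset.mem_univ _, Nat.one_lt_two⟩
    rw [hfilter, Finset.sum_pair hne01, Finset.card_univ, Fintype.card_fin]
    rw [nsmul_eq_mul, hnz]
    ring1
  constructor
  · -- properties of y
    have hsumy : ∑ i, y i = 4 * ((n : ℤ) - 2) := by
      rw [show (∑ i, y i) = ∑ i : Fin n,
        (if (i:ℕ) < 2 then (k:ℤ) - 2 else if (i:ℕ) = 2 then 6 else 3) from rfl, key]
      rw [hnz]; ring
    have hsqy : ∑ i, (y i)^2 = 2 * ((k:ℤ)-2)^2 + 36 + 9*(2*(k:ℤ)-2) := by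
      have h2 : ∀ i : Fin n, (y i)^2
          = if (i:ℕ) < 2 then ((k:ℤ)-2)^2 else if (i:ℕ) = 2 then 36 else 9 := by
        intro i
        simp only [y]
        split_ifs <;> norm_num
      rw [Finset.sum_congr rfl (fun i _ => h2 i), key, hnz]; ring
    refine ⟨?_, hsumy, ?_, hsqy, ?_⟩
    · intro i j hij
      have h := Fin.le_def.mp hij
      simp only [y]
      split_ifs <;> omega
    · intro i
      constructor <;> (simp only [y]; split_ifs <;> omega)
    · rw [hsqy]; ring
  · -- maximality
    intro x hmono hsum hbd
    set s : Finset (Fin n) := (univ.erase i0).erase i1 with hs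
    have h10 : i1 ∈ univ.erase i0 := Finset.mem_erase.mpr ⟨hne10, Finset.mem_univ _⟩
    have hmem : ∀ i ∈ s, 2 ≤ (i:ℕ) := by
      intro i hi
      rw [hs, Finset.mem_erase, Finset.mem_erase] at hi
      obtain ⟨h1, h0, -⟩ := hi
      have v1 : (i:ℕ) ≠ 1 := fun h => h1 (Fin.ext h)
      have v0 : (i:ℕ) ≠ 0 := fun h => h0 (Fin.ext h)
      omega
    have hi2s : i2 ∈ s := by
      rw [hs, Finset.mem_erase, Finset.mem_erase]
      exact ⟨hne21, hne20, Finset.mem_univ _⟩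
    have hles : ∀ i ∈ s, x i ≤ x i2 := by
      intro i hi
      exact hmono i2 i (by rw [Fin.le_def]; exact hmem i hi)
    have hsplit : ∀ f : Fin n → ℤ, ∑ i, f i = f i0 + f i1 + ∑ i ∈ s, f i := by
      intro f
      have e1 := Finset.sum_erase_add univ f (Finset.mem_univ i0)
      have e2 := Finset.sum_erase_add (univ.erase i0) f h10
      rw [← e1, ← e2, hs]; ring
    have hcardN : s.card = n - 2 := by
      rw [hs, Finset.card_erase_of_mem h10,
        Finset.card_erase_of_mem (Finset.mem_univ i0), Finset.card_univ,
        Fintype.card_fin]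
      omega
    have hcardZ : (s.card : ℤ) = 2*(k:ℤ) - 1 := by
      rw [hcardN]; push_cast [hn]; omega
    have hT : ∑ i ∈ s, x i = 8*(k:ℤ) - 4 - x i0 - x i1 := by
      have h := hsplit x
      rw [hsum, hnz] at h
      linarith
    have hc : x i2 ≤ 2*(k:ℤ) + 2 - x i0 - x i1 := by
      have hsum2 := Finset.sum_erase_add s x hi2s
      have hge : ((s.erase i2).card : ℤ) * 3 ≤ ∑ i ∈ s.erase i2, x i := by
        have h3 : ∀ i ∈ s.erase i2, (3:ℤ) ≤ x i := fun i _ => (hbd i).1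
        calc ((s.erase i2).card : ℤ) * 3 = ∑ _i ∈ s.erase i2, (3:ℤ) := by
              rw [Finset.sum_const, nsmul_eq_mul]
          _ ≤ ∑ i ∈ s.erase i2, x i := Finset.sum_le_sum h3
      have hcard2 : (s.erase i2).card = s.card - 1 := Finset.card_erase_of_mem hi2s
      have hcard2Z : ((s.erase i2).card : ℤ) = 2*(k:ℤ) - 2 := by
        rw [hcard2, hcardN]; push_cast [hn]; omega
      rw [hcard2Z] at hge
      linarith
    have hsq : ∑ i ∈ s, (x i)^2
        ≤ (x i2 + 3) * (8*(k:ℤ)-4 - x i0 - x i1) - 3 * x i2 * (2*(k:ℤ)-1) := by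
      calc ∑ i ∈ s, (x i)^2 ≤ ∑ i ∈ s, ((x i2 + 3) * x i - 3 * x i2) := by
            apply Finset.sum_le_sum
            intro i hi
            nlinarith [hles i hi, (hbd i).1]
        _ = (x i2 + 3) * (∑ i ∈ s, x i) - (s.card : ℤ) * (3 * x i2) := by
            rw [Finset.sum_sub_distrib, ← Finset.mul_sum, Finset.sum_const,
              nsmul_eq_mul]
        _ = (x i2 + 3) * (8*(k:ℤ)-4 - x i0 - x i1) - 3 * x i2 * (2*(k:ℤ)-1) := by
            rw [hT, hcardZ]; ring
    have hmain := aux_scalar (x i0) (x i1) (x i2) k (by exact_mod_cast hk)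
      (hbd i2).1 (hmono i1 i2 (by rw [Fin.le_def]; exact (show (1:ℕ) ≤ 2 by omega)))
      (hmono i0 i1 (by rw [Fin.le_def]; exact (show (0:ℕ) ≤ 1 by omega)))
      (hbd i0).2 (by linarith)
    calc ∑ i, (x i)^2 = x i0^2 + x i1^2 + ∑ i ∈ s, (x i)^2 :=
          hsplit (fun i => (x i)^2)
      _ ≤ 2 * (k : ℤ) ^ 2 + 10 * (k : ℤ) + 26 := by linarith
end
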